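/- Let T be the generalized Coxian subgenerator: T_{ii} = -λ_i, T_{i,i+1} = λ_i(1-p_i) for i < n, with λ_i > 0, p_i ∈ [0,1) for i < n, p_n = 1, and initial vector α = e₁. Then ν = -αT⁻¹ has i-th entry (1/λ_i)·(1-p_1)⋯(1-p_{i-1}), and the time-reversed representation satisfies T*_{ii} = -λ_i, T*_{i,i-1} = λ_i for i > 1, and α*_i = p_i(1-p_{i-1})⋯(1-p_1), t* = λ_1 e₁ᵀ. -/

import Mathlib

open Matrix

/-- Time-reversal of a (generalized) Coxian representation started in phase 1:
`ν_i = (1/λ_i) ∏_{k<i}(1-p_k)`, the reversed generator has `-λ_i` on the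
diagonal and `λ_i` on the subdiagonal, `α*_i = p_i ∏_{k<i}(1-p_k)`, and
`t* = λ_1 e₁ᵀ`. -/
theorem coxian_reversal {n : ℕ} (hn : 0 < n) (lam p : Fin n → ℝ)
    (hlam : ∀ i, 0 < lam i)
    (hp : ∀ i : Fin n, (i : ℕ) < n - 1 → p i ∈ Set.Ico (0 : ℝ) 1)
    (hpn : p (⟨n - 1, Nat.sub_lt hn one_pos⟩ : Fin n) = 1)
    (T : Matrix (Fin n) (Fin n) ℝ)
    (hTdef : T = Matrix.of fun i j : Fin n => if j = i then -lam i
      else if (j : ℕ) = (i : ℕ) + 1 then lam i * (1 - p i) else 0)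
    (α : Fin n → ℝ) (hα : α = Pi.single (⟨0, hn⟩ : Fin n) 1)
    (ν : Fin n → ℝ) (hν : ν = -(α ᵥ* T⁻¹))
    (αstar : Fin n → ℝ)
    (hαstar : αstar = (fun i => -(∑ j, T i j)) ᵥ* Matrix.diagonal ν)
    (Tstar : Matrix (Fin n) (Fin n) ℝ)
    (hTstar : Tstar = (Matrix.diagonal ν)⁻¹ * Tᵀ * Matrix.diagonal ν)
    (tstar : Fin n → ℝ) (htstar : tstar = (Matrix.diagonal ν)⁻¹ *ᵥ α) :
    (∀ i, ν i = (1 / lam i) * ∏ k ∈ Finset.Iio i, (1 - p k)) ∧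
      (∀ i, Tstar i i = -lam i) ∧
      (∀ i j : Fin n, (j : ℕ) + 1 = (i : ℕ) → Tstar i j = lam i) ∧
      (∀ i, αstar i = p i * ∏ k ∈ Finset.Iio i, (1 - p k)) ∧
      tstar = Pi.single (⟨0, hn⟩ : Fin n) (lam ⟨0, hn⟩) := by
  -- pointwise description of T as a sum of two ite's
  have hTij : ∀ i j : Fin n, T i j = (if j = i then -lam i else 0)
      + (if (j : ℕ) = (i : ℕ) + 1 then lam i * (1 - p i) else 0) := by
    intro i j
    rw [hTdef, Matrix.of_apply]
    rcases eq_or_ne j i with h | h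
    · subst h; rw [if_pos rfl, if_pos rfl, if_neg (by omega), add_zero]
    · rw [if_neg h, if_neg h, zero_add]
  -- products are positive
  have hprodpos : ∀ i : Fin n, 0 < ∏ k ∈ Finset.Iio i, (1 - p k) := by
    intro i
    apply Finset.prod_pos
    intro k hk
    have hk1 : (k : ℕ) < (i : ℕ) := Fin.lt_def.mp (Finset.mem_Iio.mp hk)
    have hk2 : (k : ℕ) < n - 1 := by have := i.isLt; omega
    have := (hp k hk2).2
    linarith
  have hIio0 : Finset.Iio (⟨0, hn⟩ : Fin n) = ∅ := by
    ext k; simp [Fin.lt_def]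
  have hprodsucc : ∀ j i : Fin n, (j : ℕ) + 1 = (i : ℕ) →
      ∏ k ∈ Finset.Iio i, (1 - p k) = (1 - p j) * ∏ k ∈ Finset.Iio j, (1 - p k) := by
    intro j i hji
    have hins : Finset.Iio i = insert j (Finset.Iio j) := by
      ext k
      simp only [Finset.mem_Iio, Finset.mem_insert, Fin.lt_def, Fin.ext_iff]
      omega
    rw [hins, Finset.prod_insert (by simp)]
  -- the candidate stationary-type vector
  set w : Fin n → ℝ := fun i => (1 / lam i) * ∏ k ∈ Finset.Iio i, (1 - p k) with hw
  -- T is upper triangular with nonzero determinant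
  have hup : T.BlockTriangular id := by
    intro i j hij
    have hij' : (j : ℕ) < (i : ℕ) := hij
    rw [hTdef, Matrix.of_apply, if_neg (by intro h; subst h; omega), if_neg (by omega)]
  have hdet : T.det ≠ 0 := by
    rw [Matrix.det_of_upperTriangular hup]
    apply Finset.prod_ne_zero_iff.mpr
    intro i _
    rw [hTdef, Matrix.of_apply, if_pos rfl]
    have := hlam i
    intro h; rw [neg_eq_zero] at h; linarith
  -- w ᵥ* T = -α
  have hwT : w ᵥ* T = -α := by
    funext j
    have hsum : (w ᵥ* T) j = ∑ i, w i * T i j := by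
      simp [Matrix.vecMul, dotProduct]
    rw [hsum]
    have hsplit : ∀ i : Fin n, w i * T i j =
        (if j = i then w i * (-lam i) else 0)
        + (if (j : ℕ) = (i : ℕ) + 1 then w i * (lam i * (1 - p i)) else 0) := by
      intro i
      rw [hTij i j, mul_add, mul_ite, mul_zero, mul_ite, mul_zero]
    rw [Finset.sum_congr rfl fun i _ => hsplit i, Finset.sum_add_distrib,
      Finset.sum_ite_eq Finset.univ j (fun i => w i * (-lam i)),
      if_pos (Finset.mem_univ j)]
    rcases j with ⟨jv, hj⟩
    rcases Nat.eq_zero_or_pos jv with h0 | hpos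
    · subst h0
      have : ∀ i : Fin n, ((⟨0, hj⟩ : Fin n) : ℕ) ≠ (i : ℕ) + 1 := by intro i; simp
      rw [Finset.sum_congr rfl fun i _ => if_neg (this i), Finset.sum_const_zero, add_zero]
      have hα0 : α ⟨0, hj⟩ = 1 := by rw [hα]; exact Pi.single_eq_same _ _
      have hw0 : w ⟨0, hj⟩ = 1 / lam ⟨0, hj⟩ := by
        rw [hw]; simp only; rw [hIio0, Finset.prod_empty, mul_one]
      rw [hw0, Pi.neg_apply, hα0]
      rw [one_div, inv_mul_eq_div, neg_div, div_self (hlam _).ne']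
    · obtain ⟨m, rfl⟩ : ∃ m, jv = m + 1 := ⟨jv - 1, by omega⟩
      have hm : m < n := by omega
      have hcond : ∀ i : Fin n, (((⟨m + 1, hj⟩ : Fin n) : ℕ) = (i : ℕ) + 1) ↔ ((⟨m, hm⟩ : Fin n) = i) := by
        intro i; simp only [Fin.ext_iff]; omega
      rw [Finset.sum_congr rfl fun i _ => if_congr (hcond i) rfl rfl,
        Finset.sum_ite_eq Finset.univ (⟨m, hm⟩ : Fin n)
          (fun i => w i * (lam i * (1 - p i))), if_pos (Finset.mem_univ _)]
      have hαj : α ⟨m + 1, hj⟩ = 0 := by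
        rw [hα]; exact Pi.single_eq_of_ne (by simp [Fin.ext_iff]) _
      rw [Pi.neg_apply, hαj, neg_zero, hw]
      simp only
      rw [hprodsucc ⟨m, hm⟩ ⟨m + 1, hj⟩ rfl]
      have h1 := (hlam ⟨m + 1, hj⟩).ne'
      have h2 := (hlam ⟨m, hm⟩).ne'
      field_simp
      ring
  -- hence ν = w
  have hνw : ν = w := by
    calc ν = -(α ᵥ* T⁻¹) := hν
      _ = (-α) ᵥ* T⁻¹ := by rw [Matrix.neg_vecMul]
      _ = (w ᵥ* T) ᵥ* T⁻¹ := by rw [hwT]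
      _ = w ᵥ* (T * T⁻¹) := by rw [Matrix.vecMul_vecMul]
      _ = w := by rw [Matrix.mul_nonsing_inv T (isUnit_iff_ne_zero.mpr hdet), Matrix.vecMul_one]
  have hνpos : ∀ i, 0 < ν i := by
    intro i
    rw [hνw]
    exact mul_pos (by have := hlam i; positivity) (hprodpos i)
  have hνne : ∀ i, ν i ≠ 0 := fun i => (hνpos i).ne'
  -- lam i * ν i = ∏
  have hlamν : ∀ i, lam i * ν i = ∏ k ∈ Finset.Iio i, (1 - p k) := by
    intro i
    rw [hνw, hw]
    simp only
    field_simp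
    exact mul_div_cancel_left₀ _ (hlam i).ne'
  -- inverse of the diagonal matrix
  have hdiaginv : (Matrix.diagonal ν)⁻¹ = Matrix.diagonal (fun i => (ν i)⁻¹) := by
    apply Matrix.inv_eq_right_inv
    rw [Matrix.diagonal_mul_diagonal,
      show (fun i => ν i * (ν i)⁻¹) = fun _ => (1 : ℝ) from
        funext fun i => mul_inv_cancel₀ (hνne i), Matrix.diagonal_one]
  have hTstarij : ∀ i j : Fin n, Tstar i j = (ν i)⁻¹ * T j i * ν j := by
    intro i j
    rw [hTstar, hdiaginv, Matrix.mul_diagonal, Matrix.diagonal_mul, Matrix.transpose_apply]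
  refine ⟨fun i => by rw [hνw], ?_, ?_, ?_, ?_⟩
  · -- diagonal of Tstar
    intro i
    rw [hTstarij, hTdef, Matrix.of_apply, if_pos rfl]
    field_simp
    rw [mul_div_cancel_left₀ _ (hνne i)]
  · -- subdiagonal of Tstar
    intro i j hji
    have hTji : T j i = lam j * (1 - p j) := by
      rw [hTdef, Matrix.of_apply, if_neg (by intro h; subst h; omega), if_pos (by omega)]
    rw [hTstarij, hTji]
    have key : lam j * (1 - p j) * ν j = lam i * ν i := by
      rw [hlamν i, hprodsucc j i hji, ← hlamν j]; ring
    calc (ν i)⁻¹ * (lam j * (1 - p j)) * ν j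
        = (ν i)⁻¹ * (lam j * (1 - p j) * ν j) := by ring
      _ = (ν i)⁻¹ * (lam i * ν i) := by rw [key]
      _ = lam i := by rw [mul_comm, mul_assoc, mul_inv_cancel₀ (hνne i), mul_one]
  · -- αstar
    intro i
    have h1 : αstar i = -(∑ j, T i j) * ν i := by
      rw [hαstar, Matrix.vecMul_diagonal]
    have hrow : (∑ j, T i j) = -lam i + lam i * (1 - p i) := by
      rw [Finset.sum_congr rfl fun j _ => hTij i j, Finset.sum_add_distrib,
        Finset.sum_ite_eq' Finset.univ i (fun _ => -lam i), if_pos (Finset.mem_univ i)]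
      congr 1
      rcases lt_or_eq_of_le (Nat.succ_le_of_lt i.isLt) with h | h
      · have hcond : ∀ j : Fin n, ((j : ℕ) = (i : ℕ) + 1) ↔ (j = (⟨(i : ℕ) + 1, h⟩ : Fin n)) := by
          intro j; simp only [Fin.ext_iff]
        rw [Finset.sum_congr rfl fun j _ => if_congr (hcond j) rfl rfl,
          Finset.sum_ite_eq' Finset.univ (⟨(i : ℕ) + 1, h⟩ : Fin n) (fun _ => lam i * (1 - p i)),
          if_pos (Finset.mem_univ _)]
      · have hplast : p i = 1 := by
          have : i = (⟨n - 1, Nat.sub_lt hn one_pos⟩ : Fin n) := by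
            apply Fin.ext; show (i : ℕ) = n - 1; omega
          rw [this, hpn]
        have : ∀ j : Fin n, ¬ ((j : ℕ) = (i : ℕ) + 1) := by intro j; have := j.isLt; omega
        rw [Finset.sum_congr rfl fun j _ => if_neg (this j), Finset.sum_const_zero, hplast]
        ring
    rw [h1, hrow]
    have : (-(-lam i + lam i * (1 - p i))) * ν i = p i * (lam i * ν i) := by ring
    rw [this, hlamν i]
  · -- tstar
    funext i
    rw [htstar, hdiaginv, Matrix.mulVec_diagonal, hα]
    rcases eq_or_ne i (⟨0, hn⟩ : Fin n) with h | h
    · subst h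
      have hν0 : ν ⟨0, hn⟩ = 1 / lam ⟨0, hn⟩ := by
        rw [hνw, hw]; simp only; rw [hIio0, Finset.prod_empty, mul_one]
      rw [Pi.single_eq_same, Pi.single_eq_same, mul_one, hν0, one_div, inv_inv]
    · rw [Pi.single_eq_of_ne h, Pi.single_eq_of_ne h, mul_zero]
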